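/- Let r > 0 and x ∈ (0, 1/r). Then the function G(z) = 2·u_r(z)·(z − 2r³z² + r²z(1+2z) − r(−1 + 2z + z²))/(r·z) is differentiable at x with derivative G′(x) = −2·u_r(x)·(−1 + x + r(2 − 3x + r(−4 + 4r + 3x)))/(r+x) − u_r(x)·(1+x)²/x². -/

import Mathlib

open MeasureTheory Real Filter

/-- `u r z = √(z(1−rz)/(z+r))`, the real branch of `|w_r|` on `(0, 1/r)`. -/
noncomputable def u (r z : ℝ) : ℝ := Real.sqrt (z * (1 - r * z) / (z + r))

/-- The period function `h` of the candidate maximal Klein bottles. -/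
noncomputable def h (r : ℝ) : ℝ :=
  ∫ z in (0:ℝ)..(1/r),
    -2 * u r z * (-1 + z + r * (2 - 3 * z + r * (-4 + 4 * r + 3 * z))) / (r + z)

/-- `A₁ r = ∫₀^{1/r} u_r(z) dz`. -/
noncomputable def A₁ (r : ℝ) : ℝ := ∫ z in (0:ℝ)..(1/r), u r z

/-- `A₂ r = ∫₀^{1/r} u_r(z)/(z+r) dz`. -/
noncomputable def A₂ (r : ℝ) : ℝ := ∫ z in (0:ℝ)..(1/r), u r z / (z + r)

theorem stmt_17 (r : ℝ) (hr : 0 < r) (x : ℝ) (hx : x ∈ Set.Ioo (0:ℝ) (1/r)) :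
    HasDerivAt
      (fun z : ℝ =>
        2 * u r z * (z - 2 * r ^ 3 * z ^ 2 + r ^ 2 * z * (1 + 2 * z)
          - r * (-1 + 2 * z + z ^ 2)) / (r * z))
      (-2 * u r x * (-1 + x + r * (2 - 3 * x + r * (-4 + 4 * r + 3 * x))) / (r + x)
        - u r x * (1 + x) ^ 2 / x ^ 2) x := by
  obtain ⟨hx0, hx1⟩ := hx
  have hr0 : r ≠ 0 := hr.ne'
  have hx0' : x ≠ 0 := hx0.ne'
  have hxr : (0:ℝ) < x + r := by linarith
  have h1rx : (0:ℝ) < 1 - r * x := by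
    have h := (lt_div_iff₀ hr).mp hx1
    nlinarith
  have hfx : 0 < x * (1 - r * x) / (x + r) := by positivity
  set s := Real.sqrt (x * (1 - r * x) / (x + r)) with hs_def
  have hs0 : 0 < s := Real.sqrt_pos.mpr hfx
  have hss : s * s = x * (1 - r * x) / (x + r) := Real.mul_self_sqrt hfx.le
  -- derivative of inner rational function
  have hN : HasDerivAt (fun z : ℝ => z * (1 - r * z)) (1 - 2 * r * x) x := by
    have h := (hasDerivAt_id x).mul (((hasDerivAt_id x).const_mul r).const_sub 1)
    convert h using 1
    all_goals try rfl
    simp only [id_eq]; ring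
  have hD : HasDerivAt (fun z : ℝ => z + r) 1 x := (hasDerivAt_id x).add_const r
  have hf : HasDerivAt (fun z : ℝ => z * (1 - r * z) / (z + r))
      (((1 - 2*r*x) * (x + r) - x * (1 - r*x) * 1) / (x + r)^2) x := hN.div hD hxr.ne'
  have hu0 : HasDerivAt (fun z : ℝ => u r z)
      ((((1 - 2*r*x) * (x + r) - x * (1 - r*x) * 1) / (x + r)^2) / (2 * s)) x :=
    hf.sqrt hfx.ne'
  have hdu_eq : (((1 - 2*r*x) * (x + r) - x * (1 - r*x) * 1) / (x + r)^2) / (2 * s)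
      = (((1 - 2*r*x) * (x + r) - x * (1 - r*x)) * s * (x + r)) / (2 * (x * (1 - r*x)) * (x+r)^2) := by
    rw [div_div, div_eq_div_iff (by positivity) (by positivity)]
    have h2 : x * (1 - r * x) = s * s * (x + r) := by
      rw [hss]; field_simp
    linear_combination (((1 - 2*r*x) * (x + r) - x * (1 - r*x)) * 2 * (x+r)^2) * h2
  have hu : HasDerivAt (fun z : ℝ => u r z)
      ((((1 - 2*r*x) * (x + r) - x * (1 - r*x)) * s * (x + r)) / (2 * (x * (1 - r*x)) * (x+r)^2)) x := by
    rw [← hdu_eq]; exact hu0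
  -- derivative of polynomial factor
  have hz2 : HasDerivAt (fun z : ℝ => z ^ 2) (2 * x) x := by
    simpa using hasDerivAt_pow 2 x
  have hP : HasDerivAt
      (fun z : ℝ => z - 2 * r ^ 3 * z ^ 2 + r ^ 2 * z * (1 + 2 * z) - r * (-1 + 2 * z + z ^ 2))
      (1 - 2 * r ^ 3 * (2 * x) + (r ^ 2 * (1 + 2 * x) + r ^ 2 * x * 2) - r * (2 + 2 * x)) x := by
    have h := (((hasDerivAt_id x).sub (hz2.const_mul (2 * r ^ 3))).add
      (((hasDerivAt_id x).const_mul (r ^ 2)).mul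
        (((hasDerivAt_id x).const_mul 2).const_add 1))).sub
      (((((hasDerivAt_id x).const_mul 2).const_add (-1)).add hz2).const_mul r)
    convert h using 1
    all_goals try rfl
    simp only [id_eq]; ring
  have hnum := (hu.const_mul 2).mul hP
  have hden : HasDerivAt (fun z : ℝ => r * z) r x := by
    simpa using (hasDerivAt_id x).const_mul r
  have htot := hnum.div hden (mul_ne_zero hr0 hx0')
  convert htot using 1
  all_goals try rfl
  have hus : u r x = s := rfl
  simp only [Pi.mul_apply]
  rw [hus]
  have h1rx0 : 1 - x * r ≠ 0 := by rw [mul_comm]; exact h1rx.ne'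
  field_simp [h1rx0]
  ring
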